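/- Let N ≥ 2 be an integer, let r_0, …, r_{N−1} be real numbers, and define f : ℝ → ℂ by f(θ) = Σ_{n=0}^{N−1} r_n e^{inθ}. If f has a spectral null of order N−2 at θ = 0, then there exists a real number c such that r_n = c · (−1)^n · binom(N−1, n) for all 0 ≤ n ≤ N−1; that is, the binomial design is, up to a real scale factor, the unique length-N design achieving a spectral null of order N−2. -/

import Mathlib

open Complex Finset Polynomial

private lemma iterated_deriv_exp_sum (N : ℕ) (r : ℕ → ℝ) (m : ℕ) :
    iteratedDeriv m (fun θ : ℝ => ∑ n ∈ Finset.range N,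
      (r n : ℂ) * Complex.exp (Complex.I * (n : ℂ) * (θ : ℂ)))
    = fun θ : ℝ => ∑ n ∈ Finset.range N,
      (r n : ℂ) * (Complex.I * (n : ℂ)) ^ m * Complex.exp (Complex.I * (n : ℂ) * (θ : ℂ)) := by
  induction m with
  | zero => simp
  | succ m ih =>
      rw [iteratedDeriv_succ, ih]
      funext θ
      have h : ∀ n : ℕ, HasDerivAt (fun θ : ℝ =>
          (r n : ℂ) * (Complex.I * (n : ℂ)) ^ m * Complex.exp (Complex.I * (n : ℂ) * (θ : ℂ)))
          ((r n : ℂ) * (Complex.I * (n : ℂ)) ^ (m + 1) *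
            Complex.exp (Complex.I * (n : ℂ) * (θ : ℂ))) θ := by
        intro n
        have h1 : HasDerivAt (fun z : ℂ => Complex.exp (Complex.I * (n : ℂ) * z))
            (Complex.exp (Complex.I * (n : ℂ) * (θ : ℂ)) * (Complex.I * (n : ℂ) * 1))
            ((θ : ℝ) : ℂ) := ((hasDerivAt_id ((θ : ℝ) : ℂ)).const_mul
              (Complex.I * (n : ℂ))).cexp
        have h2 := (h1.comp_ofReal).const_mul ((r n : ℂ) * (Complex.I * (n : ℂ)) ^ m)
        convert h2 using 1
        · rfl
        ring
      have hs : HasDerivAt (fun θ : ℝ => ∑ n ∈ Finset.range N,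
          (r n : ℂ) * (Complex.I * (n : ℂ)) ^ m * Complex.exp (Complex.I * (n : ℂ) * (θ : ℂ)))
          (∑ n ∈ Finset.range N, (r n : ℂ) * (Complex.I * (n : ℂ)) ^ (m + 1) *
            Complex.exp (Complex.I * (n : ℂ) * (θ : ℂ))) θ :=
        HasDerivAt.fun_sum fun n _ => h n
      rw [hs.deriv]

theorem binomial_design_unique (N : ℕ) (hN : 2 ≤ N) (r : ℕ → ℝ) (f : ℝ → ℂ)
    (hf : ∀ θ : ℝ, f θ = ∑ n ∈ Finset.range N,
      (r n : ℂ) * Complex.exp (Complex.I * (n : ℂ) * (θ : ℂ)))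
    (hnull : ∀ m : ℕ, m ≤ N - 2 → iteratedDeriv m f 0 = 0) :
    ∃ c : ℝ, ∀ n : ℕ, n ≤ N - 1 → r n = c * (-1 : ℝ) ^ n * ((N - 1).choose n : ℝ) := by
  -- Step 1: moments vanish
  have hfe : f = fun θ : ℝ => ∑ n ∈ Finset.range N,
      (r n : ℂ) * Complex.exp (Complex.I * (n : ℂ) * (θ : ℂ)) := funext hf
  have hmomC : ∀ m : ℕ, m ≤ N - 2 →
      ∑ n ∈ Finset.range N, (r n : ℂ) * (n : ℂ) ^ m = 0 := by
    intro m hm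
    have h0 := hnull m hm
    rw [hfe, iterated_deriv_exp_sum] at h0
    simp only [Complex.ofReal_zero, mul_zero, Complex.exp_zero, mul_one, mul_pow] at h0
    have : Complex.I ^ m * ∑ n ∈ Finset.range N, (r n : ℂ) * (n : ℂ) ^ m = 0 := by
      rw [Finset.mul_sum]
      rw [← h0]
      congr 1; funext n; ring
    have hI : (Complex.I : ℂ) ^ m ≠ 0 := pow_ne_zero m Complex.I_ne_zero
    exact (mul_eq_zero.mp this).resolve_left hI
  have hmom : ∀ m : ℕ, m ≤ N - 2 →
      ∑ n ∈ Finset.range N, r n * (n : ℝ) ^ m = 0 := by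
    intro m hm
    have := hmomC m hm
    have h2 : ((∑ n ∈ Finset.range N, r n * (n : ℝ) ^ m : ℝ) : ℂ) = 0 := by
      push_cast
      exact this
    exact_mod_cast h2
  -- Step 2: any polynomial of low degree
  have hq : ∀ q : ℝ[X], q.natDegree ≤ N - 2 →
      ∑ n ∈ Finset.range N, r n * q.eval (n : ℝ) = 0 := by
    intro q hqd
    have hdeg : q.natDegree < N - 1 := by omega
    have heval : ∀ n : ℕ, q.eval (n : ℝ) =
        ∑ m ∈ Finset.range (N - 1), q.coeff m * (n : ℝ) ^ m := fun n =>
      Polynomial.eval_eq_sum_range' hdeg (n : ℝ)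
    calc ∑ n ∈ Finset.range N, r n * q.eval (n : ℝ)
        = ∑ n ∈ Finset.range N, ∑ m ∈ Finset.range (N - 1),
            q.coeff m * (r n * (n : ℝ) ^ m) := by
          refine Finset.sum_congr rfl fun n _ => ?_
          rw [heval n, Finset.mul_sum]
          refine Finset.sum_congr rfl fun m _ => ?_
          ring
      _ = ∑ m ∈ Finset.range (N - 1), q.coeff m *
            ∑ n ∈ Finset.range N, r n * (n : ℝ) ^ m := by
          rw [Finset.sum_comm]
          simp [Finset.mul_sum]
      _ = 0 := by
          refine Finset.sum_eq_zero fun m hm => ?_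
          rw [hmom m (by simp only [Finset.mem_range] at hm; omega), mul_zero]
  -- Step 3: alternating choose sums
  have hchoose : ∀ k : ℕ, k ≤ N - 2 →
      ∑ n ∈ Finset.range N, r n * (n.choose k : ℝ) = 0 := by
    intro k hk
    have hdesc := hq (descPochhammer ℝ k)
      (by rw [descPochhammer_natDegree]; omega)
    have hfac : (Nat.factorial k : ℝ) ≠ 0 := by exact_mod_cast k.factorial_ne_zero
    have : (Nat.factorial k : ℝ) * ∑ n ∈ Finset.range N, r n * (n.choose k : ℝ) = 0 := by
      rw [Finset.mul_sum, ← hdesc]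
      refine Finset.sum_congr rfl fun n _ => ?_
      rw [descPochhammer_eval_eq_descFactorial]
      rw [Nat.descFactorial_eq_factorial_mul_choose]
      push_cast
      ring
    exact (mul_eq_zero.mp this).resolve_left hfac
  -- Step 4: polynomial p
  set p : ℝ[X] := ∑ n ∈ Finset.range N, Polynomial.monomial n (r n) with hp
  have hpcoeff : ∀ n : ℕ, n < N → p.coeff n = r n := by
    intro n hn
    rw [hp, Polynomial.finset_sum_coeff]
    rw [Finset.sum_eq_single n]
    · simp
    · intro b _ hb
      simp [Polynomial.coeff_monomial, hb]
    · intro hb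
      exact absurd (Finset.mem_range.mpr hn) hb
  have hpdeg : p.natDegree ≤ N - 1 := by
    refine Polynomial.natDegree_sum_le_of_forall_le _ _ fun n hn => ?_
    refine le_trans (Polynomial.natDegree_monomial_le _) ?_
    simp only [Finset.mem_range] at hn; omega
  -- Taylor coefficients
  have htc : ∀ k : ℕ, (Polynomial.taylor 1 p).coeff k =
      ∑ n ∈ Finset.range N, (n.choose k : ℝ) * r n := by
    intro k
    rw [Polynomial.taylor_coeff, hp, map_sum, Polynomial.eval_finset_sum]
    refine Finset.sum_congr rfl fun n _ => ?_
    rw [Polynomial.hasseDeriv_monomial]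
    simp
  have htzero : ∀ k : ℕ, k < N - 1 → (Polynomial.taylor 1 p).coeff k = 0 := by
    intro k hk
    rw [htc k]
    have := hchoose k (by omega)
    rw [← this]
    refine Finset.sum_congr rfl fun n _ => mul_comm _ _
  set a : ℝ := (Polynomial.taylor 1 p).coeff (N - 1) with ha
  have htdeg : (Polynomial.taylor 1 p).natDegree ≤ N - 1 := by
    rw [Polynomial.natDegree_taylor]; exact hpdeg
  have htay : Polynomial.taylor 1 p = Polynomial.monomial (N - 1) a := by
    ext k
    rcases lt_trichotomy k (N - 1) with h | h | h
    · rw [htzero k h, Polynomial.coeff_monomial, if_neg (by omega)]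
    · rw [h, Polynomial.coeff_monomial, if_pos rfl]
    · rw [Polynomial.coeff_eq_zero_of_natDegree_lt (lt_of_le_of_lt htdeg h),
        Polynomial.coeff_monomial, if_neg (by omega)]
  have hpeq : p = Polynomial.C a * (X + Polynomial.C (-1 : ℝ)) ^ (N - 1) := by
    have := congrArg (Polynomial.taylor (-1 : ℝ)) htay
    rw [Polynomial.taylor_taylor] at this
    simp only [neg_add_cancel] at this
    rw [Polynomial.taylor_zero] at this
    rw [this, Polynomial.taylor_monomial]
  refine ⟨a * (-1 : ℝ) ^ (N - 1), fun n hn => ?_⟩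
  have hnN : n < N := by omega
  have := hpcoeff n hnN
  rw [hpeq] at this
  rw [Polynomial.coeff_C_mul, Polynomial.coeff_X_add_C_pow] at this
  rw [← this]
  have hsplit : (-1 : ℝ) ^ (N - 1) = (-1 : ℝ) ^ (N - 1 - n) * (-1 : ℝ) ^ n := by
    rw [← pow_add]
    congr 1
    omega
  rw [hsplit]
  ring_nf
  rw [pow_mul']
  norm_num
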